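/- (The mean minimizes the shifted composite quantile objective.) Let Y be an integrable real random variable whose distribution is symmetric about its mean μ_Y = E[Y], with continuous, strictly positive density g_Y, cdf G_Y and quantile function G_Y^{-1}. Fix κ_1, …, κ_K ∈ (0,1) and define the objective E(y) = E[ Σ_{k=1}^K L_{κ_k}( Y − (G_Y^{-1}(κ_k) − G_Y^{-1}(1/2)) − y ) ], where L_κ(z) = z·(κ − 1(z ≤ 0)) is the quantile loss. Then μ_Y is the unique minimizer: μ_Y = argmin_{y ∈ ℝ} E(y). -/

import Mathlib

open MeasureTheory Filter
open scoped BigOperators ENNReal Topology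

lemma aux_id (κ a b v : ℝ) :
    (v - b) * (κ - if v - b ≤ 0 then 1 else 0)
      = (v - a) * (κ - if v - a ≤ 0 then 1 else 0)
        + (a - b) * (κ - if v ≤ a then 1 else 0)
        + (v - b) * ((if v ≤ a then (1:ℝ) else 0) - (if v ≤ b then 1 else 0)) := by
  simp only [sub_nonpos]
  by_cases hva : v ≤ a <;> by_cases hvb : v ≤ b <;> simp [hva, hvb] <;> ring

lemma aux_nonneg (a b v : ℝ) :
    0 ≤ (v - b) * ((if v ≤ a then (1:ℝ) else 0) - (if v ≤ b then 1 else 0)) := by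
  by_cases hva : v ≤ a <;> by_cases hvb : v ≤ b <;> simp [hva, hvb] <;> nlinarith [not_le.mp (by assumption : ¬ _)]

lemma aux_pos (a b v : ℝ) (h : (a < v ∧ v < b) ∨ (b < v ∧ v < a)) :
    0 < (v - b) * ((if v ≤ a then (1:ℝ) else 0) - (if v ≤ b then 1 else 0)) := by
  rcases h with ⟨h1, h2⟩ | ⟨h1, h2⟩
  · rw [if_neg (not_le.mpr h1), if_pos h2.le]
    nlinarith
  · rw [if_pos h2.le, if_neg (not_le.mpr h1)]
    nlinarith

/-- The mean minimizes the shifted composite quantile objective: for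
an integrable real random variable `Y` whose law is symmetric about its mean `μ_Y`, with
continuous strictly positive density `g`, cdf `G` and quantile function `Ginv`, levels
`κ_k ∈ (0,1)`, shifts `c_k = Ginv(κ_k) − Ginv(1/2)` and objective
`E(y) = E[∑_k L_{κ_k}(Y − c_k − y)]` (with `L_κ(z) = z (κ − 1(z ≤ 0))`),
the mean `μ_Y` is the unique minimizer of `E`. -/
theorem statement18 {Ω : Type*} [MeasurableSpace Ω] (P : Measure Ω) [IsProbabilityMeasure P]
    (Y : Ω → ℝ) (hYmeas : Measurable Y) (hInt : Integrable Y P)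
    (μY : ℝ) (hμ : ∫ ω, Y ω ∂P = μY)
    (hsym : P.map (fun ω => Y ω - μY) = P.map (fun ω => μY - Y ω))
    (G g : ℝ → ℝ) (hG : ∀ y, G y = (P {ω | Y ω ≤ y}).toReal)
    (hgcont : Continuous g) (hgpos : ∀ y, 0 < g y)
    (hdens : ∀ y, G y = ∫ t in Set.Iic y, g t)
    (K : ℕ) (hK : 0 < K) (κ : Fin K → ℝ) (hκ : ∀ k, κ k ∈ Set.Ioo (0 : ℝ) 1)
    (L : ℝ → ℝ → ℝ) (hL : ∀ c z, L c z = z * (c - if z ≤ 0 then 1 else 0))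
    (Ginv : ℝ → ℝ) (hGinv : ∀ u, Ginv u = sInf {x : ℝ | u ≤ G x})
    (c : Fin K → ℝ) (hc : ∀ k, c k = Ginv (κ k) - Ginv (1 / 2))
    (Efun : ℝ → ℝ) (hE : ∀ y, Efun y = ∫ ω, ∑ k, L (κ k) (Y ω - c k - y) ∂P) :
    (∀ y : ℝ, Efun μY ≤ Efun y) ∧ ∀ y : ℝ, Efun y ≤ Efun μY → y = μY := by
  have hmap : ∀ z : ℝ, P.map Y (Set.Iic z) = P {ω | Y ω ≤ z} := by
    intro z
    rw [Measure.map_apply hYmeas measurableSet_Iic]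
    rfl
  have hmapprob : IsProbabilityMeasure (P.map Y) := Measure.isProbabilityMeasure_map hYmeas.aemeasurable
  -- g integrable on every Iic
  have hgInt : ∀ y : ℝ, IntegrableOn g (Set.Iic y) := by
    intro y
    by_contra hni
    have hzero : ∀ z, y ≤ z → G z = 0 := by
      intro z hz
      rw [hdens z]
      exact integral_undef (fun h => hni (MeasureTheory.IntegrableOn.mono_set h (Set.Iic_subset_Iic.2 hz)))
    have h1 : Tendsto (fun z : ℝ => P.map Y (Set.Iic z)) atTop (𝓝 1) := by
      simpa using tendsto_measure_Iic_atTop (P.map Y)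
    have hev := (h1.eventually_ne (one_ne_zero)).and (eventually_ge_atTop y)
    obtain ⟨z, hz1, hz2⟩ := hev.exists
    have : G z ≠ 0 := by
      rw [hG, ← hmap]
      exact ENNReal.toReal_ne_zero.mpr ⟨hz1, measure_ne_top _ _⟩
    exact this (hzero z hz2)
  have Gdiff : ∀ a b : ℝ, a ≤ b → G b = G a + ∫ t in Set.Ioc a b, g t := by
    intro a b hab
    rw [hdens, hdens, ← Set.Iic_union_Ioc_eq_Iic hab,
      setIntegral_union (Set.Iic_disjoint_Ioc le_rfl) measurableSet_Ioc (hgInt a)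
        ((hgInt b).mono_set Set.Ioc_subset_Iic_self)]
  have Gmono : StrictMono G := by
    intro a b hab
    have h2 : 0 < ∫ t in Set.Ioc a b, g t := by
      rw [← intervalIntegral.integral_of_le hab.le]
      exact intervalIntegral.intervalIntegral_pos_of_pos_on (hgcont.intervalIntegrable a b)
        (fun x _ => hgpos x) hab
    have := Gdiff a b hab.le
    linarith
  have Gcont : Continuous G := by
    have h0 : ∀ y, G y = G 0 + ∫ x in (0:ℝ)..y, g x := by
      intro y
      rcases le_total 0 y with h | h
      · rw [intervalIntegral.integral_of_le h]
        exact Gdiff 0 y h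
      · have := Gdiff y 0 h
        rw [intervalIntegral.integral_symm, intervalIntegral.integral_of_le h]
        linarith
    exact (continuous_const.add
      (intervalIntegral.continuous_primitive (fun a b => hgcont.intervalIntegrable a b) 0)).congr
      (fun y => (h0 y).symm)
  have GtendTop : Tendsto G atTop (𝓝 1) := by
    have h1 : Tendsto (fun z : ℝ => P.map Y (Set.Iic z)) atTop (𝓝 1) := by
      simpa using tendsto_measure_Iic_atTop (P.map Y)
    have heq : (fun z : ℝ => ((P.map Y) (Set.Iic z)).toReal) = G := by
      funext z; rw [hmap, ← hG]
    rw [← heq]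
    simpa [Function.comp_def] using (ENNReal.tendsto_toReal ENNReal.one_ne_top).comp h1
  have GtendBot : Tendsto G atBot (𝓝 0) := by
    have hint : ⋂ z : ℝ, Set.Iic z = ∅ := by
      ext x
      simp only [Set.mem_iInter, Set.mem_Iic, Set.mem_empty_iff_false, iff_false, not_forall]
      exact ⟨x - 1, by norm_num⟩
    have h1 : Tendsto (fun z : ℝ => P.map Y (Set.Iic z)) atBot (𝓝 0) := by
      have := tendsto_measure_iInter_atBot (μ := P.map Y)
        (fun z => measurableSet_Iic.nullMeasurableSet) (fun a b hab => Set.Iic_subset_Iic.2 hab)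
        ⟨0, measure_ne_top _ _⟩
      rw [hint] at this
      simpa [Function.comp_def] using this
    have heq : (fun z : ℝ => ((P.map Y) (Set.Iic z)).toReal) = G := by
      funext z; rw [hmap, ← hG]
    rw [← heq]
    simpa [Function.comp_def] using (ENNReal.tendsto_toReal ENNReal.zero_ne_top).comp h1
  -- quantile inversion
  have Gq : ∀ u : ℝ, 0 < u → u < 1 → G (sInf {x : ℝ | u ≤ G x}) = u := by
    intro u hu0 hu1
    set S := {x : ℝ | u ≤ G x} with hS
    have hSne : S.Nonempty := by
      obtain ⟨x, hx⟩ := (GtendTop.eventually (eventually_gt_nhds hu1)).exists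
      exact ⟨x, hx.le⟩
    have hSbdd : BddBelow S := by
      obtain ⟨x0, hx0⟩ := (GtendBot.eventually (eventually_lt_nhds hu0)).exists
      refine ⟨x0, fun x hx => ?_⟩
      by_contra hlt
      exact absurd (le_trans hx ((Gmono (not_le.mp hlt)).le)) (not_le.mpr hx0)
    have hclosed : IsClosed S := isClosed_le continuous_const Gcont
    have hmem : sInf S ∈ S := hclosed.csInf_mem hSne hSbdd
    refine le_antisymm ?_ hmem
    by_contra hlt
    push_neg at hlt
    have hev : ∀ᶠ x in 𝓝 (sInf S), u < G x := Gcont.continuousAt.eventually (eventually_gt_nhds hlt)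
    obtain ⟨x, hx1, hx2⟩ := (hev.filter_mono nhdsWithin_le_nhds).and
      (eventually_mem_nhdsWithin (s := Set.Iio (sInf S))) |>.exists
    exact absurd (csInf_le hSbdd hx1.le) (not_le.mpr hx2)
  -- interval probabilities are positive
  have hPoo : ∀ a b : ℝ, a < b → 0 < (P {ω | a < Y ω ∧ Y ω < b}).toReal := by
    intro a b hab
    set m := (a + b) / 2 with hm
    have ham : a < m := by rw [hm]; linarith
    have hmb : m < b := by rw [hm]; linarith
    have hsub : {ω | Y ω ≤ a} ⊆ {ω | Y ω ≤ m} := fun ω h => le_trans h ham.le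
    have hdm : P ({ω | Y ω ≤ m} \ {ω | Y ω ≤ a}) = P {ω | Y ω ≤ m} - P {ω | Y ω ≤ a} :=
      measure_diff hsub (hYmeas measurableSet_Iic).nullMeasurableSet (measure_ne_top _ _)
    have htr : (P ({ω | Y ω ≤ m} \ {ω | Y ω ≤ a})).toReal = G m - G a := by
      rw [hdm, ENNReal.toReal_sub_of_le (measure_mono hsub) (measure_ne_top _ _), ← hG, ← hG]
    have hpos : 0 < (P ({ω | Y ω ≤ m} \ {ω | Y ω ≤ a})).toReal := by
      rw [htr]; linarith [Gmono ham]
    refine lt_of_lt_of_le hpos (ENNReal.toReal_le_toReal (measure_ne_top _ _) (measure_ne_top _ _)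
      |>.mpr (measure_mono ?_))
    rintro ω ⟨h1, h2⟩
    exact ⟨not_le.mp h2, lt_of_le_of_lt h1 hmb⟩
  -- no point masses
  have hpoint : ∀ t : ℝ, P {ω | Y ω = t} = 0 := by
    intro t
    have hb : ∀ ε : ℝ, 0 < ε → (P {ω | Y ω = t}).toReal ≤ G t - G (t - ε) := by
      intro ε hε
      have hsub : {ω | Y ω ≤ t - ε} ⊆ {ω | Y ω ≤ t} := fun ω h => by
        simp only [Set.mem_setOf_eq] at h ⊢; linarith
      have hdm : P ({ω | Y ω ≤ t} \ {ω | Y ω ≤ t - ε}) = P {ω | Y ω ≤ t} - P {ω | Y ω ≤ t - ε} :=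
        measure_diff hsub (hYmeas measurableSet_Iic).nullMeasurableSet (measure_ne_top _ _)
      have hmono : P {ω | Y ω = t} ≤ P ({ω | Y ω ≤ t} \ {ω | Y ω ≤ t - ε}) := by
        refine measure_mono ?_
        rintro ω h
        rw [Set.mem_setOf_eq] at h
        refine ⟨h.le, ?_⟩
        simp only [Set.mem_setOf_eq, h, not_le]
        linarith
      calc (P {ω | Y ω = t}).toReal
          ≤ (P ({ω | Y ω ≤ t} \ {ω | Y ω ≤ t - ε})).toReal :=
            (ENNReal.toReal_le_toReal (measure_ne_top _ _) (measure_ne_top _ _)).mpr hmono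
        _ = G t - G (t - ε) := by
            rw [hdm, ENNReal.toReal_sub_of_le (measure_mono hsub) (measure_ne_top _ _), ← hG, ← hG]
    have htend : Tendsto (fun ε : ℝ => G t - G (t - ε)) (𝓝[>] (0:ℝ)) (𝓝 0) := by
      have hc : Continuous (fun ε : ℝ => G t - G (t - ε)) :=
        continuous_const.sub (Gcont.comp (continuous_const.sub continuous_id))
      have := hc.tendsto 0
      simpa using this.mono_left nhdsWithin_le_nhds
    have h0 : (P {ω | Y ω = t}).toReal ≤ 0 :=
      ge_of_tendsto htend (eventually_nhdsWithin_of_forall (fun ε hε => hb ε hε))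
    have h1 : (P {ω | Y ω = t}).toReal = 0 := le_antisymm h0 ENNReal.toReal_nonneg
    exact (ENNReal.toReal_eq_zero_iff _).mp h1 |>.resolve_right (measure_ne_top _ _)
  -- symmetry gives G μY = 1/2
  have Ghalf : G μY = 1/2 := by
    have e0 : P.map (fun ω => Y ω - μY) (Set.Iic 0) = P.map (fun ω => μY - Y ω) (Set.Iic 0) := congrArg (fun μ : Measure ℝ => μ (Set.Iic (0:ℝ))) hsym
    rw [Measure.map_apply (f := fun ω => Y ω - μY) (hYmeas.sub measurable_const) measurableSet_Iic,
      Measure.map_apply (f := fun ω => μY - Y ω) (measurable_const.sub hYmeas) measurableSet_Iic] at e0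
    have epre1 : (fun ω => Y ω - μY) ⁻¹' (Set.Iic 0) = {ω | Y ω ≤ μY} := by
      ext ω; simp [sub_nonpos]
    have epre2 : (fun ω => μY - Y ω) ⁻¹' (Set.Iic 0) = {ω | Y ω < μY}ᶜ := by
      ext ω; simp [sub_nonpos, not_lt]
    rw [epre1, epre2] at e0
    have ecompl : P ({ω | Y ω < μY}ᶜ) = 1 - P {ω | Y ω < μY} := by
      rw [measure_compl (measurableSet_lt hYmeas measurable_const) (measure_ne_top _ _),
        measure_univ]
    have eunion : P {ω | Y ω ≤ μY} = P {ω | Y ω < μY} := by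
      have : {ω | Y ω ≤ μY} = {ω | Y ω < μY} ∪ {ω | Y ω = μY} := by
        ext ω; simp [le_iff_lt_or_eq]
      rw [this]
      refine le_antisymm ?_ (measure_mono Set.subset_union_left)
      calc P ({ω | Y ω < μY} ∪ {ω | Y ω = μY}) ≤ P {ω | Y ω < μY} + P {ω | Y ω = μY} :=
            measure_union_le _ _
        _ = P {ω | Y ω < μY} := by rw [hpoint μY, add_zero]
    have ele : P {ω | Y ω < μY} ≤ 1 := prob_le_one
    have e1 : P {ω | Y ω < μY} = 1 - P {ω | Y ω < μY} :=
      calc P {ω | Y ω < μY} = P {ω | Y ω ≤ μY} := eunion.symm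
        _ = P ({ω | Y ω < μY}ᶜ) := e0
        _ = 1 - P {ω | Y ω < μY} := ecompl
    have e2 : (P {ω | Y ω < μY}).toReal = 1 - (P {ω | Y ω < μY}).toReal := by
      have e2' := congrArg ENNReal.toReal e1
      rwa [ENNReal.toReal_sub_of_le ele ENNReal.one_ne_top, ENNReal.toReal_one] at e2'
    rw [hG, eunion]
    linarith
  -- measurability and integrability toolkit
  have hmeasle : ∀ t : ℝ, MeasurableSet {ω | Y ω ≤ t} := fun t =>
    measurableSet_le hYmeas measurable_const
  have hindmeas : ∀ t : ℝ, Measurable (fun ω => if Y ω ≤ t then (1:ℝ) else 0) := fun t =>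
    Measurable.ite (hmeasle t) measurable_const measurable_const
  have hindInt : ∀ t : ℝ, Integrable (fun ω => if Y ω ≤ t then (1:ℝ) else 0) P := by
    intro t
    have heq : (fun ω => if Y ω ≤ t then (1:ℝ) else 0)
        = Set.indicator {ω | Y ω ≤ t} (fun _ => 1) := by
      funext ω; simp [Set.indicator_apply, Set.mem_setOf_eq]
    rw [heq]
    exact (integrable_const 1).indicator (hmeasle t)
  have hindval : ∀ t : ℝ, ∫ ω, (if Y ω ≤ t then (1:ℝ) else 0) ∂P = G t := by
    intro t
    have heq : (fun ω => if Y ω ≤ t then (1:ℝ) else 0) = ({ω | Y ω ≤ t}).indicator 1 := by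
      funext ω
      simp [Set.indicator_apply, Set.mem_setOf_eq]
    rw [hG t, heq]
    exact integral_indicator_one (hmeasle t)
  have hLint : ∀ (κv b : ℝ),
      Integrable (fun ω => (Y ω - b) * (κv - if Y ω - b ≤ 0 then 1 else 0)) P := by
    intro κv b
    have h1 : Integrable (fun ω => Y ω - b) P := hInt.sub (integrable_const b)
    have h2 : AEStronglyMeasurable (fun ω => (κv - if Y ω - b ≤ 0 then (1:ℝ) else 0)) P :=
      (measurable_const.sub (Measurable.ite
        (measurableSet_le (hYmeas.sub measurable_const) measurable_const)
        measurable_const measurable_const)).aestronglyMeasurable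
    have h3 := h1.bdd_mul (c := |κv| + 1) h2 (Filter.Eventually.of_forall fun ω => by
      rw [Real.norm_eq_abs]
      have h4 := le_abs_self κv
      have h5 := neg_abs_le κv
      by_cases h : Y ω - b ≤ 0 <;> simp only [h, if_true, if_false] <;>
        exact abs_le.mpr ⟨by linarith, by linarith⟩)
    exact h3.congr (Filter.Eventually.of_forall (fun ω => mul_comm _ _))
  have hψint : ∀ a b : ℝ, Integrable (fun ω =>
      (Y ω - b) * ((if Y ω ≤ a then (1:ℝ) else 0) - (if Y ω ≤ b then 1 else 0))) P := by
    intro a b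
    have h2 : AEStronglyMeasurable
        (fun ω => ((if Y ω ≤ a then (1:ℝ) else 0) - (if Y ω ≤ b then 1 else 0))) P :=
      ((hindmeas a).sub (hindmeas b)).aestronglyMeasurable
    have h3 := (hInt.sub (integrable_const b)).bdd_mul (c := 2) h2 (Filter.Eventually.of_forall fun ω => by
      rw [Real.norm_eq_abs]
      by_cases h : Y ω ≤ a <;> by_cases h' : Y ω ≤ b <;>
        simp only [h, h', if_true, if_false] <;> norm_num)
    exact h3.congr (Filter.Eventually.of_forall (fun ω => mul_comm _ _))
  -- the key comparison identity
  have key : ∀ (κv a b : ℝ), G a = κv →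
      ∫ ω, (Y ω - b) * (κv - if Y ω - b ≤ 0 then 1 else 0) ∂P
        = ∫ ω, (Y ω - a) * (κv - if Y ω - a ≤ 0 then 1 else 0) ∂P
          + ∫ ω, (Y ω - b) * ((if Y ω ≤ a then (1:ℝ) else 0)
              - (if Y ω ≤ b then 1 else 0)) ∂P := by
    intro κv a b ha
    have hint2 : Integrable (fun ω => (a - b) * (κv - if Y ω ≤ a then (1:ℝ) else 0)) P :=
      ((integrable_const κv).sub (hindInt a)).const_mul (a - b)
    have heq : (fun ω => (Y ω - b) * (κv - if Y ω - b ≤ 0 then 1 else 0))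
        = fun ω => ((Y ω - a) * (κv - if Y ω - a ≤ 0 then 1 else 0)
            + (a - b) * (κv - if Y ω ≤ a then (1:ℝ) else 0))
            + (Y ω - b) * ((if Y ω ≤ a then (1:ℝ) else 0) - (if Y ω ≤ b then 1 else 0)) := by
      funext ω
      exact aux_id κv a b (Y ω)
    have hAB : Integrable (fun ω => (Y ω - a) * (κv - if Y ω - a ≤ 0 then 1 else 0)
        + (a - b) * (κv - if Y ω ≤ a then (1:ℝ) else 0)) P := (hLint κv a).add hint2
    rw [heq, integral_add hAB (hψint a b), integral_add (hLint κv a) hint2]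
    have hzero : ∫ ω, (a - b) * (κv - if Y ω ≤ a then (1:ℝ) else 0) ∂P = 0 := by
      rw [integral_const_mul, integral_sub (integrable_const κv) (hindInt a), hindval a,
        integral_const]
      simp [ha]
    rw [hzero]
    ring
  -- strict positivity when b ≠ a
  have hψpos : ∀ a b : ℝ, b ≠ a →
      0 < ∫ ω, (Y ω - b) * ((if Y ω ≤ a then (1:ℝ) else 0)
          - (if Y ω ≤ b then 1 else 0)) ∂P := by
    intro a b hne
    rw [integral_pos_iff_support_of_nonneg (fun ω => aux_nonneg a b (Y ω)) (hψint a b)]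
    have hsupp : ∀ u v : ℝ, u < v → {ω | u < Y ω ∧ Y ω < v} ⊆ Function.support
        (fun ω => (Y ω - b) * ((if Y ω ≤ a then (1:ℝ) else 0)
          - (if Y ω ≤ b then 1 else 0))) → True := fun _ _ _ _ => trivial
    rcases hne.lt_or_gt with h | h
    · -- b < a
      have hp := hPoo b a h
      have hp' : 0 < P {ω | b < Y ω ∧ Y ω < a} := by
        rcases (ENNReal.toReal_pos_iff.mp hp) with ⟨h1, _⟩
        exact h1
      refine lt_of_lt_of_le hp' (measure_mono ?_)
      rintro ω ⟨h1, h2⟩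
      exact ne_of_gt (aux_pos a b (Y ω) (Or.inr ⟨h1, h2⟩))
    · -- a < b
      have hp := hPoo a b h
      have hp' : 0 < P {ω | a < Y ω ∧ Y ω < b} := by
        rcases (ENNReal.toReal_pos_iff.mp hp) with ⟨h1, _⟩
        exact h1
      refine lt_of_lt_of_le hp' (measure_mono ?_)
      rintro ω ⟨h1, h2⟩
      exact ne_of_gt (aux_pos a b (Y ω) (Or.inl ⟨h1, h2⟩))
  -- quantile facts
  have hq : ∀ k, G (Ginv (κ k)) = κ k := fun k => by
    rw [hGinv]; exact Gq _ (hκ k).1 (hκ k).2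
  have hGhalf : Ginv (1/2) = μY := by
    have h2 : G (Ginv (1/2)) = 1/2 := by
      rw [hGinv]; exact Gq _ (by norm_num) (by norm_num)
    exact Gmono.injective (by rw [h2, Ghalf])
  have hA : ∀ k, c k + μY = Ginv (κ k) := fun k => by rw [hc k, hGhalf]; ring
  -- rewrite the loss into normal form
  have hLform : ∀ (k : Fin K) (y : ℝ), (fun ω => L (κ k) (Y ω - c k - y))
      = fun ω => (Y ω - (c k + y)) * (κ k - if Y ω - (c k + y) ≤ 0 then 1 else 0) := by
    intro k y
    funext ω
    rw [hL]
    simp only [sub_sub]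
  -- term-by-term decomposition
  have hterm : ∀ (k : Fin K) (y : ℝ), ∫ ω, L (κ k) (Y ω - c k - y) ∂P
      = ∫ ω, L (κ k) (Y ω - c k - μY) ∂P
        + ∫ ω, (Y ω - (c k + y)) * ((if Y ω ≤ Ginv (κ k) then (1:ℝ) else 0)
            - (if Y ω ≤ c k + y then 1 else 0)) ∂P := by
    intro k y
    rw [hLform k y, hLform k μY, hA k, key (κ k) (Ginv (κ k)) (c k + y) (hq k)]
  have hEdecomp : ∀ y : ℝ, Efun y = Efun μY
      + ∑ k, ∫ ω, (Y ω - (c k + y)) * ((if Y ω ≤ Ginv (κ k) then (1:ℝ) else 0)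
          - (if Y ω ≤ c k + y then 1 else 0)) ∂P := by
    intro y
    have hIα : ∀ (y' : ℝ) (k : Fin K), Integrable (fun ω => L (κ k) (Y ω - c k - y')) P := by
      intro y' k
      rw [hLform k y']
      exact hLint (κ k) (c k + y')
    rw [hE y, hE μY, integral_finset_sum _ (fun k _ => hIα y k),
      integral_finset_sum _ (fun k _ => hIα μY k), ← Finset.sum_add_distrib]
    exact Finset.sum_congr rfl (fun k _ => hterm k y)
  have hsum_nonneg : ∀ y : ℝ, 0 ≤ ∑ k, ∫ ω, (Y ω - (c k + y))
      * ((if Y ω ≤ Ginv (κ k) then (1:ℝ) else 0) - (if Y ω ≤ c k + y then 1 else 0)) ∂P :=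
    fun y => Finset.sum_nonneg (fun k _ =>
      integral_nonneg (fun ω => aux_nonneg (Ginv (κ k)) (c k + y) (Y ω)))
  constructor
  · intro y
    rw [hEdecomp y]
    linarith [hsum_nonneg y]
  · intro y hy
    by_contra hne
    have hne' : ∀ k : Fin K, c k + y ≠ Ginv (κ k) := by
      intro k hcontra
      exact hne (by have := hA k; linarith)
    have : Nonempty (Fin K) := ⟨⟨0, hK⟩⟩
    have hpos : 0 < ∑ k, ∫ ω, (Y ω - (c k + y))
        * ((if Y ω ≤ Ginv (κ k) then (1:ℝ) else 0) - (if Y ω ≤ c k + y then 1 else 0)) ∂P :=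
      Finset.sum_pos (fun k _ => hψpos (Ginv (κ k)) (c k + y) (hne' k)) Finset.univ_nonempty
    rw [hEdecomp y] at hy
    linarith
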